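/- Let κ be a regular cardinal and T a κ-tree with the fine wedge topology. If T is κ-compact, then T has no cofinal branch (i.e., T is κ-Aronszajn). -/

import Mathlib

universe u

/-- A partial order is a tree if the set of strict predecessors of every point
is well-ordered by `<`. -/
def IsTree (T : Type u) [PartialOrder T] : Prop :=
  ∀ x : T, IsWellOrder {y : T // y < x} (fun a b => (a : T) < (b : T))

/-- The height of a node of a tree: the order type of its set of strict predecessors. -/
noncomputable def nodeHeight {T : Type u} [PartialOrder T] (hT : IsTree T) (x : T) :
    Ordinal.{u} :=
  letI := hT x
  Ordinal.type (fun a b : {y : T // y < x} => (a : T) < (b : T))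

/-- A `κ`-tree: a tree of height `κ` all of whose levels have size `< κ`. -/
def IsKTree {T : Type u} [PartialOrder T] (hT : IsTree T) (κ : Cardinal.{u}) : Prop :=
  (∀ x : T, nodeHeight hT x < κ.ord) ∧
  (∀ o : Ordinal.{u}, o < κ.ord → ∃ x : T, nodeHeight hT x = o) ∧
  (∀ o : Ordinal.{u}, Cardinal.mk {x : T | nodeHeight hT x = o} < κ)

/-- The fine wedge topology on a tree: generated by the cones `↑t = Set.Ici t`
and their complements. -/
def fineWedge (T : Type u) [PartialOrder T] : TopologicalSpace T :=
  TopologicalSpace.generateFrom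
    ({s | ∃ t : T, s = Set.Ici t} ∪ {s | ∃ t : T, s = (Set.Ici t)ᶜ})

/-- `κ`-compactness: every open cover has a subcover of cardinality less than `κ`. -/
def KCompact (κ : Cardinal.{u}) {X : Type u} (t : TopologicalSpace X) : Prop :=
  ∀ 𝒰 : Set (Set X), (∀ U ∈ 𝒰, t.IsOpen U) → ⋃₀ 𝒰 = Set.univ →
    ∃ 𝒰₀ ⊆ 𝒰, Cardinal.mk 𝒰₀ < κ ∧ ⋃₀ 𝒰₀ = Set.univ

lemma nodeHeight_strictMono {T : Type u} [PartialOrder T] (hT : IsTree T) {x y : T}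
    (h : x < y) : nodeHeight hT x < nodeHeight hT y := by
  letI := hT x
  letI := hT y
  unfold nodeHeight
  refine PrincipalSeg.ordinal_type_lt ?_
  refine ⟨⟨⟨fun z => ⟨z.1, z.2.trans h⟩, ?_⟩, ?_⟩, ⟨x, h⟩, ?_⟩
  · intro a b hab
    simpa [Subtype.ext_iff] using hab
  · intro a b; rfl
  · rintro ⟨z, hz⟩
    constructor
    · rintro ⟨⟨w, hw⟩, he⟩
      have : w = z := congrArg Subtype.val he
      subst this
      exact hw
    · intro hzx; exact ⟨⟨z, hzx⟩, rfl⟩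

lemma nodeHeight_mono {T : Type u} [PartialOrder T] (hT : IsTree T) {x y : T}
    (h : x ≤ y) : nodeHeight hT x ≤ nodeHeight hT y := by
  rcases h.lt_or_eq with h | rfl
  · exact (nodeHeight_strictMono hT h).le
  · exact le_rfl

theorem stmt_15 (κ : Cardinal.{u}) (hκ : Cardinal.aleph0 ≤ κ) (hreg : κ.IsRegular)
    (T : Type u) [PartialOrder T] (hT : IsTree T) (hK : IsKTree hT κ)
    (hc : KCompact κ (fineWedge T)) :
    -- `T` has no cofinal branch: no maximal chain meeting every level
    ¬ ∃ b : Set T, IsChain (· ≤ ·) b ∧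
        (∀ c : Set T, IsChain (· ≤ ·) c → b ⊆ c → b = c) ∧
        (∀ o : Ordinal.{u}, o < κ.ord → ∃ x ∈ b, nodeHeight hT x = o) := by
  rintro ⟨b, hchain, hmax, hcof⟩
  have hlim : Order.IsSuccLimit κ.ord := Cardinal.isSuccLimit_ord hκ
  -- the cover
  set 𝒰 : Set (Set T) := (fun x => (Set.Ici x)ᶜ) '' b with h𝒰
  have hopen : ∀ U ∈ 𝒰, (fineWedge T).IsOpen U := by
    rintro U ⟨x, -, rfl⟩
    exact TopologicalSpace.GenerateOpen.basic _ (Or.inr ⟨x, rfl⟩)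
  have hcover : ⋃₀ 𝒰 = Set.univ := by
    ext y
    simp only [Set.mem_sUnion, Set.mem_univ, iff_true]
    by_contra hy
    push_neg at hy
    have hy' : ∀ x ∈ b, x ≤ y := by
      intro x hx
      by_contra hxy
      exact hy _ ⟨x, hx, rfl⟩ hxy
    have hyb : y ∈ b := by
      have := hmax (insert y b) ?_ (Set.subset_insert _ _)
      · rw [this]; exact Set.mem_insert _ _
      · intro p hp q hq hpq
        rcases hp with rfl | hp <;> rcases hq with rfl | hq
        · exact absurd rfl hpq
        · exact Or.inr (hy' _ hq)
        · exact Or.inl (hy' _ hp)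
        · exact hchain hp hq hpq
    obtain ⟨x, hxb, hxh⟩ := hcof (nodeHeight hT y + 1) (hlim.succ_lt (hK.1 y))
    have hxy : x ≤ y := hy' x hxb
    have := nodeHeight_mono hT hxy
    rw [hxh] at this
    exact absurd this (by simp [Order.succ_le_iff])
  obtain ⟨𝒰₀, hsub, hcard, hcov₀⟩ := hc 𝒰 hopen hcover
  -- choose a branch element for each set of the subcover
  have hch : ∀ U : 𝒰₀, ∃ x, x ∈ b ∧ (Set.Ici x)ᶜ = (U : Set T) := fun U => hsub U.2
  choose g hg1 hg2 using hch
  set f : 𝒰₀ → Ordinal.{u} := fun U => nodeHeight hT (g U) with hf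
  have hflt : ∀ U, f U < κ.ord := fun U => hK.1 _
  have hsup : iSup f < κ.ord := Cardinal.iSup_lt_ord_of_isRegular hreg hcard hflt
  obtain ⟨y, hyb, hyh⟩ := hcof (iSup f + 1) (hlim.succ_lt hsup)
  have hyU : ∀ U : 𝒰₀, y ∉ (U : Set T) := by
    intro U
    rw [← hg2 U]
    simp only [Set.mem_compl_iff, Set.mem_Ici, not_not]
    -- show g U ≤ y using the chain and heights
    have hlt : nodeHeight hT (g U) < nodeHeight hT y := by
      rw [hyh]
      exact lt_of_le_of_lt (le_ciSup (Ordinal.bddAbove_range f) U) (Order.lt_succ _)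
    rcases hchain.total (hg1 U) hyb with h | h
    · exact h
    · exact absurd (nodeHeight_mono hT h) (not_le_of_gt hlt)
  have : y ∈ ⋃₀ 𝒰₀ := hcov₀ ▸ Set.mem_univ y
  obtain ⟨U, hU, hyU'⟩ := this
  exact hyU ⟨U, hU⟩ hyU'
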